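/- Let S be a countably compact Clifford topological semigroup which is first countable at an idempotent e and whose inversion is continuous at e. Then the maximal subgroup H_e = {x ∈ S : x*x⁻¹ = e} is a metrizable topological group (with the subspace topology). -/

import Mathlib

/-- `X` is countably compact: every countable open cover has a finite subcover. -/
def CountablyCompact (X : Type*) [TopologicalSpace X] : Prop :=
  ∀ U : ℕ → Set X, (∀ n, IsOpen (U n)) → (⋃ n, U n) = Set.univ →
    ∃ N : Finset ℕ, (⋃ n ∈ N, U n) = Set.univ

/-- Uniqueness of the (Drazin/group) inverse in a semigroup. -/
private theorem drazin_unique {S : Type*} [Semigroup S] {y z₁ z₂ : S}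
    (a1 : y * z₁ * y = y) (b1 : z₁ * y * z₁ = z₁) (c1 : y * z₁ = z₁ * y)
    (a2 : y * z₂ * y = y) (b2 : z₂ * y * z₂ = z₂) (c2 : y * z₂ = z₂ * y) :
    z₁ = z₂ := by
  have h4 : y * z₁ * (y * z₂) = y * z₂ := by rw [← mul_assoc, a1]
  have h5 : y * z₁ * (y * z₂) = y * z₁ := by
    rw [c1, c2, mul_assoc, ← mul_assoc y z₂ y, a2]
  have h6 : y * z₁ = y * z₂ := h5.symm.trans h4
  calc z₁ = z₁ * y * z₁ := b1.symm
    _ = z₁ * (y * z₂) := by rw [mul_assoc, h6]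
    _ = z₁ * y * z₂ := (mul_assoc z₁ y z₂).symm
    _ = y * z₁ * z₂ := by rw [← c1]
    _ = y * z₂ * z₂ := by rw [h6]
    _ = z₂ * y * z₂ := by rw [c2]
    _ = z₂ := b2

/-- In a Hausdorff countably compact Clifford topological semigroup which is first
countable at an idempotent `e` and has inversion continuous at `e`, the maximal
subgroup `H_e = {x : x * x⁻¹ = e}` is a metrizable topological group: it is closed
under multiplication and inversion, has identity `e` and inverses, the inversion is
continuous on it, and it is metrizable in the subspace topology. -/
theorem maximal_subgroup_metrizable {S : Type*} [TopologicalSpace S] [Semigroup S]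
    [ContinuousMul S] [T2Space S]
    (hcc : CountablyCompact S) (inv : S → S)
    (h1 : ∀ x : S, x * inv x * x = x)
    (h2 : ∀ x : S, inv x * x * inv x = inv x)
    (h3 : ∀ x : S, x * inv x = inv x * x)
    (e : S) (he : e * e = e)
    (hfc : (nhds e).IsCountablyGenerated)
    (hinv_e : ContinuousAt inv e) :
    (∀ x ∈ {x : S | x * inv x = e}, ∀ y ∈ {x : S | x * inv x = e},
        x * y ∈ {x : S | x * inv x = e}) ∧
    e ∈ {x : S | x * inv x = e} ∧
    (∀ x ∈ {x : S | x * inv x = e}, inv x ∈ {x : S | x * inv x = e}) ∧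
    (∀ x ∈ {x : S | x * inv x = e},
        x * e = x ∧ e * x = x ∧ x * inv x = e ∧ inv x * x = e) ∧
    ContinuousOn inv {x : S | x * inv x = e} ∧
    TopologicalSpace.MetrizableSpace {x : S | x * inv x = e} := by
  -- basic consequences of membership
  have memE : ∀ x : S, x ∈ {x : S | x * inv x = e} ↔ x * inv x = e := fun x => Iff.rfl
  have hxi : ∀ x : S, x * inv x = e → inv x * x = e := fun x hx => (h3 x).symm.trans hx
  have hxe : ∀ x : S, x * inv x = e → x * e = x := by
    intro x hx
    rw [← hxi x hx, ← mul_assoc]; exact h1 x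
  have hex : ∀ x : S, x * inv x = e → e * x = x := by
    intro x hx
    rw [← hx]; exact h1 x
  have hei : ∀ x : S, x * inv x = e → e * inv x = inv x := by
    intro x hx
    rw [← hxi x hx]; exact h2 x
  have hie : ∀ x : S, x * inv x = e → inv x * e = inv x := by
    intro x hx
    rw [← hx, ← mul_assoc]; exact h2 x
  -- `inv (inv x) = x`
  have hinvinv : ∀ x : S, inv (inv x) = x := by
    intro x
    exact drazin_unique (h1 (inv x)) (h2 (inv x)) (h3 (inv x))
      (h2 x) (h1 x) (h3 x).symm
  have hinvmem : ∀ x ∈ {x : S | x * inv x = e}, inv x ∈ {x : S | x * inv x = e} := by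
    intro x hx
    show inv x * inv (inv x) = e
    rw [hinvinv x]; exact hxi x hx
  -- `inv e = e` and `e ∈ H`
  have hinve : inv e = e :=
    drazin_unique (h1 e) (h2 e) (h3 e) (by rw [he, he]) (by rw [he, he]) rfl
  have hemem : e ∈ {x : S | x * inv x = e} := by
    show e * inv e = e
    rw [hinve]; exact he
  -- the inverse of a product
  have hinvmul : ∀ x ∈ {x : S | x * inv x = e}, ∀ y ∈ {x : S | x * inv x = e},
      inv (x * y) = inv y * inv x ∧ (x * y) * (inv y * inv x) = e ∧
        (inv y * inv x) * (x * y) = e := by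
    intro x hx y hy
    have hx' : x * inv x = e := hx
    have hy' : y * inv y = e := hy
    have hxyz : (x * y) * (inv y * inv x) = e := by
      rw [mul_assoc x y, ← mul_assoc y (inv y) (inv x), hy', hei x hx']
      exact hx'
    have hzxy : (inv y * inv x) * (x * y) = e := by
      rw [mul_assoc (inv y) (inv x), ← mul_assoc (inv x) x y, hxi x hx', hex y hy']
      exact hxi y hy'
    have heq : inv (x * y) = inv y * inv x := by
      refine drazin_unique (h1 (x * y)) (h2 (x * y)) (h3 (x * y)) ?_ ?_ ?_
      · rw [hxyz, ← mul_assoc, hex x hx']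
      · rw [hzxy, ← mul_assoc, hei y hy']
      · rw [hxyz, hzxy]
    exact ⟨heq, hxyz, hzxy⟩
  have hmulmem : ∀ x ∈ {x : S | x * inv x = e}, ∀ y ∈ {x : S | x * inv x = e},
      x * y ∈ {x : S | x * inv x = e} := by
    intro x hx y hy
    show (x * y) * inv (x * y) = e
    rw [(hinvmul x hx y hy).1]
    exact (hinvmul x hx y hy).2.1
  -- continuity of `inv` on `H`
  have hcontOn : ContinuousOn inv {x : S | x * inv x = e} := by
    intro x hx
    have hx' : x * inv x = e := hx
    have key : ∀ y ∈ {x : S | x * inv x = e}, inv y = inv (inv x * y) * inv x := by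
      intro y hy
      have hy' : y * inv y = e := hy
      have := (hinvmul (inv x) (hinvmem x hx) y hy).1
      rw [this, hinvinv x, mul_assoc, hx', hie y hy']
    have c1 : ContinuousAt (fun y : S => inv x * y) x :=
      (continuous_const.mul continuous_id).continuousAt
    have c2 : ContinuousAt inv (inv x * x) := by
      rw [hxi x hx']; exact hinv_e
    have hcont : ContinuousAt (fun y : S => inv (inv x * y) * inv x) x :=
      (ContinuousAt.comp c2 c1).mul continuousAt_const
    exact hcont.continuousWithinAt.congr key (key x hx)
  -- the group structure on the subtype
  letI : Group {x : S | x * inv x = e} :=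
    { mul := fun a b => ⟨a.1 * b.1, hmulmem a.1 a.2 b.1 b.2⟩
      mul_assoc := fun a b c => Subtype.ext (mul_assoc a.1 b.1 c.1)
      one := ⟨e, hemem⟩
      one_mul := fun a => Subtype.ext (hex a.1 a.2)
      mul_one := fun a => Subtype.ext (hxe a.1 a.2)
      inv := fun a => ⟨inv a.1, hinvmem a.1 a.2⟩
      inv_mul_cancel := fun a => Subtype.ext (hxi a.1 a.2) }
  haveI : ContinuousMul {x : S | x * inv x = e} :=
    ⟨Continuous.subtype_mk
      ((continuous_subtype_val.comp continuous_fst).mul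
        (continuous_subtype_val.comp continuous_snd)) _⟩
  haveI : ContinuousInv {x : S | x * inv x = e} :=
    ⟨Continuous.subtype_mk hcontOn.restrict _⟩
  haveI : IsTopologicalGroup {x : S | x * inv x = e} := {}
  haveI := hfc
  haveI : (nhds (1 : {x : S | x * inv x = e})).IsCountablyGenerated := by
    rw [nhds_subtype_eq_comap]
    exact Filter.comap.isCountablyGenerated _ _
  letI u : UniformSpace {x : S | x * inv x = e} :=
    IsTopologicalGroup.rightUniformSpace {x : S | x * inv x = e}
  haveI : (uniformity {x : S | x * inv x = e}).IsCountablyGenerated := by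
    have hu : (uniformity {x : S | x * inv x = e}) =
        Filter.comap (fun p : {x : S | x * inv x = e} × {x : S | x * inv x = e} => p.2 / p.1)
          (nhds 1) := rfl
    rw [hu]
    exact Filter.comap.isCountablyGenerated _ _
  have hmetr : TopologicalSpace.MetrizableSpace {x : S | x * inv x = e} :=
    UniformSpace.metrizableSpace
  exact ⟨hmulmem, hemem, hinvmem, fun x hx => ⟨hxe x hx, hex x hx, hx, hxi x hx⟩,
    hcontOn, hmetr⟩
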